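/- Suppose the support of Π is contained in [−κ, κ] for some κ < ∞. Let φ : ℝ → ℝ be convex and differentiable with φ(0) = 0 and |φ'(y)| ≤ κ for all y. Then φ ∈ D(T), the function Tφ is well-defined, convex and differentiable, and it satisfies Tφ(0) = 0 and |(Tφ)'(y)| ≤ κ for all y ∈ ℝ. -/

import Mathlib

open MeasureTheory Real Set Filter
open Topology

noncomputable section

/-- Density of the centered normal distribution with variance `σ²`. -/
def pdens (σ y : ℝ) : ℝ :=
  (Real.sqrt (2 * Real.pi * σ ^ 2))⁻¹ * Real.exp (-(y ^ 2) / (2 * σ ^ 2))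

/-- The operator `T₁`: `T₁φ(v) = ∫ exp((yv − φ(y))/ĉ) p_σ(y) dy` with `ĉ = cσ²`. -/
def T1 (c σ : ℝ) (φ : ℝ → ℝ) (v : ℝ) : ℝ :=
  ∫ y : ℝ, Real.exp ((y * v - φ y) / (c * σ ^ 2)) * pdens σ y

/-- The operator `T₂`: `T₂Ψ(y) = ∫ exp((yv − Ψ(v))/ĉ) Pr(dv)`. -/
def T2 (c σ : ℝ) (Pr : Measure ℝ) (Ψ : ℝ → ℝ) (y : ℝ) : ℝ :=
  ∫ v : ℝ, Real.exp ((y * v - Ψ v) / (c * σ ^ 2)) ∂Pr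

/-- `Ψ = ĉ · log T₁φ`. -/
def Ψof (c σ : ℝ) (φ : ℝ → ℝ) (v : ℝ) : ℝ := c * σ ^ 2 * Real.log (T1 c σ φ v)

/-- Topological support of a measure on `ℝ`. -/
def msupport (Pr : Measure ℝ) : Set ℝ := {v | ∀ U : Set ℝ, IsOpen U → v ∈ U → 0 < Pr U}

/-- The unnormalised operator `T₀φ = ĉ · log T₂(ĉ log T₁ φ)`. -/
def T0op (c σ : ℝ) (Pr : Measure ℝ) (φ : ℝ → ℝ) (y : ℝ) : ℝ :=
  c * σ ^ 2 * Real.log (T2 c σ Pr (Ψof c σ φ) y)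

/-- The normalised operator `Tφ = ĉ · log ( T₂(ĉ log T₁ φ) / T₂(ĉ log T₁ φ)(0) )`. -/
def Tnorm (c σ : ℝ) (Pr : Measure ℝ) (φ : ℝ → ℝ) (y : ℝ) : ℝ :=
  c * σ ^ 2 * Real.log (T2 c σ Pr (Ψof c σ φ) y / T2 c σ Pr (Ψof c σ φ) 0)

/-- Membership in the domain `D(T)`: `T₁φ ∈ (0,∞)` on the support of `Pr` (finiteness being
integrability of the positive integrand) and `T₂(ĉ log T₁φ) ∈ (0,∞)` everywhere. -/
def memD (c σ : ℝ) (Pr : Measure ℝ) (φ : ℝ → ℝ) : Prop :=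
  (∀ v ∈ msupport Pr,
    Integrable (fun y : ℝ => Real.exp ((y * v - φ y) / (c * σ ^ 2)) * pdens σ y) ∧
      0 < T1 c σ φ v) ∧
  (∀ y : ℝ,
    Integrable (fun v : ℝ => Real.exp ((y * v - Ψof c σ φ v) / (c * σ ^ 2))) Pr ∧
      0 < T2 c σ Pr (Ψof c σ φ) y)

lemma integrable_exp_linear_sub_sq {a b : ℝ} (ha : 0 < a) :
    Integrable (fun y : ℝ => Real.exp (b * y - a * y ^ 2)) := by
  have h : ∀ y : ℝ, b * y - a * y ^ 2 = b ^ 2 / (4 * a) + -(a * (y - b / (2 * a)) ^ 2) := by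
    intro y; field_simp; ring
  simp_rw [h, Real.exp_add]
  apply Integrable.const_mul
  have := (integrable_exp_neg_mul_sq ha).comp_sub_right (b / (2 * a))
  simpa [neg_mul] using this

lemma comb_lin {cc C a b ls l1 l2 : ℝ} (hcc : 0 ≤ cc) (hab : a + b = 1)
    (h : ls ≤ a * l1 + b * l2) :
    cc * ls - C ≤ a * (cc * l1 - C) + b * (cc * l2 - C) := by
  have hb' : b = 1 - a := by linarith
  subst hb'
  nlinarith [mul_le_mul_of_nonneg_left h hcc]

lemma holder_int {μ : Measure ℝ} {f g : ℝ → ℝ} (hf : Integrable f μ) (hg : Integrable g μ)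
    (hf0 : ∀ x, 0 ≤ f x) (hg0 : ∀ x, 0 ≤ g x) {a b : ℝ} (ha : 0 < a) (hb : 0 < b)
    (hab : a + b = 1) (hfg : Integrable (fun x => f x ^ a * g x ^ b) μ) :
    ∫ x, f x ^ a * g x ^ b ∂μ ≤ (∫ x, f x ∂μ) ^ a * (∫ x, g x ∂μ) ^ b := by
  have ha1 : a < 1 := by linarith
  have hpq : Real.HolderConjugate a⁻¹ b⁻¹ :=
    Real.holderConjugate_iff.mpr ⟨one_lt_inv₀ ha |>.2 ha1, by rw [inv_inv, inv_inv]; exact hab⟩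
  have hFm : AEMeasurable (fun x => ENNReal.ofReal (f x) ^ a) μ :=
    (ENNReal.measurable_ofReal.comp_aemeasurable hf.1.aemeasurable).pow_const a
  have hGm : AEMeasurable (fun x => ENNReal.ofReal (g x) ^ b) μ :=
    (ENNReal.measurable_ofReal.comp_aemeasurable hg.1.aemeasurable).pow_const b
  have key := ENNReal.lintegral_mul_le_Lp_mul_Lq μ hpq hFm hGm
  simp only [Pi.mul_apply] at key
  have hsimp1 : ∀ x, (ENNReal.ofReal (f x) ^ a) ^ (a⁻¹ : ℝ) = ENNReal.ofReal (f x) := fun x => by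
    rw [← ENNReal.rpow_mul, mul_inv_cancel₀ ha.ne', ENNReal.rpow_one]
  have hsimp2 : ∀ x, (ENNReal.ofReal (g x) ^ b) ^ (b⁻¹ : ℝ) = ENNReal.ofReal (g x) := fun x => by
    rw [← ENNReal.rpow_mul, mul_inv_cancel₀ hb.ne', ENNReal.rpow_one]
  simp only [hsimp1, hsimp2, one_div, inv_inv] at key
  have hofmul : ∀ x, ENNReal.ofReal (f x) ^ a * ENNReal.ofReal (g x) ^ b
      = ENNReal.ofReal (f x ^ a * g x ^ b) := fun x => by
    rw [ENNReal.ofReal_rpow_of_nonneg (hf0 x) ha.le, ENNReal.ofReal_rpow_of_nonneg (hg0 x) hb.le,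
      ← ENNReal.ofReal_mul (Real.rpow_nonneg (hf0 x) a)]
  simp only [hofmul] at key
  rw [← ofReal_integral_eq_lintegral_ofReal hfg
      (Eventually.of_forall fun x => mul_nonneg (Real.rpow_nonneg (hf0 x) a)
        (Real.rpow_nonneg (hg0 x) b)),
    ← ofReal_integral_eq_lintegral_ofReal hf (Eventually.of_forall hf0),
    ← ofReal_integral_eq_lintegral_ofReal hg (Eventually.of_forall hg0),
    ENNReal.ofReal_rpow_of_nonneg (integral_nonneg hf0) ha.le,
    ENNReal.ofReal_rpow_of_nonneg (integral_nonneg hg0) hb.le,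
    ← ENNReal.ofReal_mul (Real.rpow_nonneg (integral_nonneg hf0) a)] at key
  exact (ENNReal.ofReal_le_ofReal_iff
    (mul_nonneg (Real.rpow_nonneg (integral_nonneg hf0) a)
      (Real.rpow_nonneg (integral_nonneg hg0) b))).1 key

/-- if the support of `Pr` lies in `[−κ, κ]` and `φ` is convex, differentiable,
vanishes at `0` and has `|φ'| ≤ κ`, then `φ ∈ D(T)` and `Tφ` is convex, differentiable,
vanishes at `0` and has `|(Tφ)'| ≤ κ`. -/
theorem stmt9 (c σ : ℝ) (hc : 0 < c) (hσ : 0 < σ)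
    (Pr : Measure ℝ) [IsProbabilityMeasure Pr]
    (κ : ℝ) (hsupp : msupport Pr ⊆ Set.Icc (-κ) κ)
    (φ : ℝ → ℝ) (hconv : ConvexOn ℝ Set.univ φ) (hdiff : Differentiable ℝ φ)
    (hφ0 : φ 0 = 0) (hφ' : ∀ y : ℝ, |deriv φ y| ≤ κ) :
    memD c σ Pr φ ∧
    ConvexOn ℝ Set.univ (Tnorm c σ Pr φ) ∧
    Differentiable ℝ (Tnorm c σ Pr φ) ∧
    Tnorm c σ Pr φ 0 = 0 ∧
    (∀ y : ℝ, |deriv (Tnorm c σ Pr φ) y| ≤ κ) := by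
  have hcsq : (0:ℝ) < c * σ ^ 2 := by positivity
  have hκ0 : (0:ℝ) ≤ κ := (abs_nonneg _).trans (hφ' 0)
  -- |φ y| ≤ κ |y|
  have hφb : ∀ y : ℝ, |φ y| ≤ κ * |y| := by
    intro y
    have h := Convex.norm_image_sub_le_of_norm_deriv_le (s := (univ : Set ℝ))
      (fun x _ => hdiff x) (fun x _ => by simpa using hφ' x) convex_univ
      (mem_univ 0) (mem_univ y)
    simpa [hφ0, Real.norm_eq_abs] using h
  -- continuity and positivity of the T1 integrand
  have hφcont : Continuous φ := hdiff.continuous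
  have hFcont : ∀ v : ℝ, Continuous
      (fun y : ℝ => Real.exp ((y * v - φ y) / (c * σ ^ 2)) * pdens σ y) := by
    intro v
    apply Continuous.mul
    · exact (((continuous_id.mul continuous_const).sub hφcont).div_const _).rexp
    · unfold pdens
      exact continuous_const.mul
        (((continuous_pow 2).neg.div_const _).rexp)
  have hFpos : ∀ v y : ℝ, 0 < Real.exp ((y * v - φ y) / (c * σ ^ 2)) * pdens σ y := by
    intro v y
    apply mul_pos (Real.exp_pos _)
    unfold pdens
    apply mul_pos _ (Real.exp_pos _)
    rw [inv_pos]
    apply Real.sqrt_pos.2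
    positivity
  -- dominating function for T1
  have hbnd_int : ∀ R : ℝ, Integrable (fun y : ℝ =>
      (Real.sqrt (2 * Real.pi * σ ^ 2))⁻¹ *
        (Real.exp (((R + κ) / (c * σ ^ 2)) * y - (2 * σ ^ 2)⁻¹ * y ^ 2) +
         Real.exp ((-((R + κ) / (c * σ ^ 2))) * y - (2 * σ ^ 2)⁻¹ * y ^ 2))) := by
    intro R
    have ha : (0:ℝ) < (2 * σ ^ 2)⁻¹ := by positivity
    exact ((integrable_exp_linear_sub_sq ha).add (integrable_exp_linear_sub_sq ha)).const_mul _
  have hFle : ∀ (R v : ℝ), |v| ≤ R → ∀ y : ℝ,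
      ‖Real.exp ((y * v - φ y) / (c * σ ^ 2)) * pdens σ y‖ ≤
      (Real.sqrt (2 * Real.pi * σ ^ 2))⁻¹ *
        (Real.exp (((R + κ) / (c * σ ^ 2)) * y - (2 * σ ^ 2)⁻¹ * y ^ 2) +
         Real.exp ((-((R + κ) / (c * σ ^ 2))) * y - (2 * σ ^ 2)⁻¹ * y ^ 2)) := by
    intro R v hvR y
    have hR0 : 0 ≤ R := (abs_nonneg v).trans hvR
    rw [Real.norm_of_nonneg (hFpos v y).le]
    unfold pdens
    rw [show Real.exp ((y * v - φ y) / (c * σ ^ 2)) *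
        ((Real.sqrt (2 * Real.pi * σ ^ 2))⁻¹ * Real.exp (-(y ^ 2) / (2 * σ ^ 2)))
        = (Real.sqrt (2 * Real.pi * σ ^ 2))⁻¹ *
          Real.exp ((y * v - φ y) / (c * σ ^ 2) + -(y ^ 2) / (2 * σ ^ 2)) by
      rw [Real.exp_add]; ring]
    have hsq : (0:ℝ) ≤ (Real.sqrt (2 * Real.pi * σ ^ 2))⁻¹ := by positivity
    apply mul_le_mul_of_nonneg_left _ hsq
    have hexple : (y * v - φ y) / (c * σ ^ 2) + -(y ^ 2) / (2 * σ ^ 2)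
        ≤ ((R + κ) / (c * σ ^ 2)) * |y| - (2 * σ ^ 2)⁻¹ * y ^ 2 := by
      have h1 : y * v - φ y ≤ (R + κ) * |y| := by
        have h2 : y * v ≤ |y| * R :=
          (le_abs_self _).trans (by rw [abs_mul]; exact
            mul_le_mul_of_nonneg_left hvR (abs_nonneg y))
        have h3 : -φ y ≤ κ * |y| := (neg_le_abs _).trans (hφb y)
        nlinarith
      have h4 : (y * v - φ y) / (c * σ ^ 2) ≤ ((R + κ) * |y|) / (c * σ ^ 2) := by
        gcongr
      have h5 : -(y ^ 2) / (2 * σ ^ 2) = -((2 * σ ^ 2)⁻¹ * y ^ 2) := by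
        field_simp
      rw [h5]
      have : ((R + κ) * |y|) / (c * σ ^ 2) = ((R + κ) / (c * σ ^ 2)) * |y| := by ring
      linarith [h4.trans_eq this]
    rcases le_total 0 y with hy | hy
    · have : ((R + κ) / (c * σ ^ 2)) * |y| = ((R + κ) / (c * σ ^ 2)) * y := by
        rw [abs_of_nonneg hy]
      calc Real.exp ((y * v - φ y) / (c * σ ^ 2) + -(y ^ 2) / (2 * σ ^ 2))
          ≤ Real.exp (((R + κ) / (c * σ ^ 2)) * y - (2 * σ ^ 2)⁻¹ * y ^ 2) := by
            apply Real.exp_le_exp.2; rw [← this]; exact hexple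
        _ ≤ _ := le_add_of_nonneg_right (Real.exp_pos _).le
    · have : ((R + κ) / (c * σ ^ 2)) * |y| = (-((R + κ) / (c * σ ^ 2))) * y := by
        rw [abs_of_nonpos hy]; ring
      calc Real.exp ((y * v - φ y) / (c * σ ^ 2) + -(y ^ 2) / (2 * σ ^ 2))
          ≤ Real.exp ((-((R + κ) / (c * σ ^ 2))) * y - (2 * σ ^ 2)⁻¹ * y ^ 2) := by
            apply Real.exp_le_exp.2; rw [← this]; exact hexple
        _ ≤ _ := le_add_of_nonneg_left (Real.exp_pos _).le
  -- T1 integrable and positive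
  have hT1int : ∀ v : ℝ,
      Integrable (fun y : ℝ => Real.exp ((y * v - φ y) / (c * σ ^ 2)) * pdens σ y) := by
    intro v
    exact Integrable.mono' (hbnd_int |v|) (hFcont v).aestronglyMeasurable
      (Eventually.of_forall (hFle |v| v le_rfl))
  have hT1pos : ∀ v : ℝ, 0 < T1 c σ φ v := by
    intro v
    rw [T1, integral_pos_iff_support_of_nonneg (fun y => (hFpos v y).le) (hT1int v)]
    have : Function.support (fun y : ℝ =>
        Real.exp ((y * v - φ y) / (c * σ ^ 2)) * pdens σ y) = univ :=
      Set.eq_univ_of_forall fun y => (hFpos v y).ne'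
    rw [this]
    simp
  -- continuity of T1 and Ψ
  have hT1cont : Continuous (T1 c σ φ) := by
    rw [continuous_iff_continuousAt]
    intro v₀
    have hball : ∀ᶠ v in 𝓝 v₀, |v| ≤ |v₀| + 1 := by
      filter_upwards [Metric.ball_mem_nhds v₀ one_pos] with v hv
      have : |v - v₀| < 1 := by simpa [Real.dist_eq] using hv
      calc |v| = |v₀ + (v - v₀)| := by ring_nf
        _ ≤ |v₀| + |v - v₀| := abs_add_le _ _
        _ ≤ |v₀| + 1 := by linarith
    unfold T1
    apply continuousAt_of_dominated
      (Eventually.of_forall fun v => (hFcont v).aestronglyMeasurable)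
      (hball.mono fun v hv => Eventually.of_forall (hFle (|v₀| + 1) v hv))
      (hbnd_int (|v₀| + 1))
      (Eventually.of_forall fun y => Continuous.continuousAt (by
        apply Continuous.mul
        · exact (((continuous_mul_left y).sub continuous_const).div_const _).rexp
        · exact continuous_const))
  have hΨcont : Continuous (Ψof c σ φ) := by
    unfold Ψof
    exact continuous_const.mul (hT1cont.log fun v => (hT1pos v).ne')
  -- the support of Pr has full measure
  have hPrsupp : Pr (msupport Pr)ᶜ = 0 := by
    obtain ⟨T, hTc, hTsub, hTU⟩ := TopologicalSpace.isOpen_sUnion_countable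
      {U : Set ℝ | IsOpen U ∧ Pr U = 0} (fun U hU => hU.1)
    have hcompl : (msupport Pr)ᶜ = ⋃₀ {U : Set ℝ | IsOpen U ∧ Pr U = 0} := by
      ext v
      simp only [mem_compl_iff, msupport, mem_setOf_eq, mem_sUnion]
      constructor
      · intro h
        push_neg at h
        obtain ⟨U, hUo, hvU, hU0⟩ := h
        exact ⟨U, ⟨hUo, le_antisymm (by simpa using hU0) zero_le⟩, hvU⟩
      · rintro ⟨U, ⟨hUo, hU0⟩, hvU⟩ h
        exact absurd (h U hUo hvU) (by simp [hU0])
    rw [hcompl, ← hTU]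
    exact (measure_sUnion_null_iff hTc).2 fun U hU => (hTsub hU).2
  have haeIcc : ∀ᵐ v ∂Pr, v ∈ Icc (-κ) κ := by
    have h0 : Pr (Icc (-κ) κ)ᶜ = 0 :=
      measure_mono_null (compl_subset_compl.2 hsupp) hPrsupp
    rw [ae_iff]
    simpa [Set.compl_def] using h0
  -- bound on Ψ on the support interval
  obtain ⟨Mψ, hMψ⟩ := (isCompact_Icc (a := -κ) (b := κ)).exists_bound_of_continuousOn
    hΨcont.continuousOn
  -- T2 integrand facts
  have hGcont : ∀ y : ℝ, Continuous
      (fun v : ℝ => Real.exp ((y * v - Ψof c σ φ v) / (c * σ ^ 2))) := by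
    intro y
    exact (((continuous_mul_left y).sub hΨcont).div_const _).rexp
  have hGbound : ∀ (y R : ℝ), |y| ≤ R → ∀ v ∈ Icc (-κ) κ,
      Real.exp ((y * v - Ψof c σ φ v) / (c * σ ^ 2)) ≤
        Real.exp ((R * κ + Mψ) / (c * σ ^ 2)) := by
    intro y R hyR v hv
    have hvκ : |v| ≤ κ := abs_le.2 ⟨hv.1, hv.2⟩
    have hR0 : 0 ≤ R := (abs_nonneg y).trans hyR
    apply Real.exp_le_exp.2
    gcongr
    have h1 : y * v ≤ R * κ := by
      calc y * v ≤ |y * v| := le_abs_self _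
        _ = |y| * |v| := abs_mul _ _
        _ ≤ R * κ := mul_le_mul hyR hvκ (abs_nonneg v) hR0
    have h2 : -Ψof c σ φ v ≤ Mψ := by
      have := hMψ v hv
      rw [Real.norm_eq_abs] at this
      linarith [neg_le_abs (Ψof c σ φ v)]
    linarith
  have hT2int : ∀ y : ℝ,
      Integrable (fun v : ℝ => Real.exp ((y * v - Ψof c σ φ v) / (c * σ ^ 2))) Pr := by
    intro y
    refine Integrable.mono' (integrable_const (Real.exp ((|y| * κ + Mψ) / (c * σ ^ 2))))
      (hGcont y).aestronglyMeasurable ?_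
    filter_upwards [haeIcc] with v hv
    rw [Real.norm_of_nonneg (Real.exp_pos _).le]
    exact hGbound y |y| le_rfl v hv
  have hT2pos : ∀ y : ℝ, 0 < T2 c σ Pr (Ψof c σ φ) y := by
    intro y
    rw [T2, integral_pos_iff_support_of_nonneg (fun v => (Real.exp_pos _).le) (hT2int y)]
    have : Function.support (fun v : ℝ =>
        Real.exp ((y * v - Ψof c σ φ v) / (c * σ ^ 2))) = univ :=
      Set.eq_univ_of_forall fun v => (Real.exp_pos _).ne'
    rw [this]
    simp
  -- derivative of T2
  have hT2deriv : ∀ y₀ : ℝ,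
      HasDerivAt (T2 c σ Pr (Ψof c σ φ))
        (∫ v, (v / (c * σ ^ 2)) * Real.exp ((y₀ * v - Ψof c σ φ v) / (c * σ ^ 2)) ∂Pr) y₀ := by
    intro y₀
    have key := hasDerivAt_integral_of_dominated_loc_of_deriv_le (μ := Pr)
      (F := fun y v => Real.exp ((y * v - Ψof c σ φ v) / (c * σ ^ 2)))
      (F' := fun y v => (v / (c * σ ^ 2)) * Real.exp ((y * v - Ψof c σ φ v) / (c * σ ^ 2)))
      (x₀ := y₀)
      (bound := fun _ => (κ / (c * σ ^ 2)) * Real.exp (((|y₀| + 1) * κ + Mψ) / (c * σ ^ 2)))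
      (Metric.ball_mem_nhds y₀ one_pos)
      (Eventually.of_forall fun y => (hGcont y).aestronglyMeasurable)
      (hT2int y₀)
      (((continuous_id.div_const _).mul (hGcont y₀)).aestronglyMeasurable)
      ?_ (integrable_const _) ?_
    · exact key.2
    · filter_upwards [haeIcc] with v hv
      intro t ht
      have htb : |t| ≤ |y₀| + 1 := by
        have : |t - y₀| < 1 := by simpa [Real.dist_eq] using ht
        calc |t| = |y₀ + (t - y₀)| := by ring_nf
          _ ≤ |y₀| + |t - y₀| := abs_add_le _ _
          _ ≤ |y₀| + 1 := by linarith
      have hvκ : |v| ≤ κ := abs_le.2 ⟨hv.1, hv.2⟩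
      rw [Real.norm_eq_abs, abs_mul, abs_div, abs_of_pos hcsq,
        abs_of_pos (Real.exp_pos _)]
      apply mul_le_mul
      · exact div_le_div_of_nonneg_right hvκ hcsq.le
      · exact hGbound t (|y₀| + 1) htb v hv
      · exact (Real.exp_pos _).le
      · positivity
    · apply Eventually.of_forall
      intro v t _
      have h0 : HasDerivAt (fun t : ℝ => (t * v - Ψof c σ φ v) / (c * σ ^ 2))
          (v / (c * σ ^ 2)) t := by
        exact ((hasDerivAt_mul_const v).sub_const _).div_const _
      simpa [mul_comm] using h0.exp
  -- bound on the derivative of T2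
  have hDbound : ∀ y : ℝ,
      |∫ v, (v / (c * σ ^ 2)) * Real.exp ((y * v - Ψof c σ φ v) / (c * σ ^ 2)) ∂Pr|
        ≤ (κ / (c * σ ^ 2)) * T2 c σ Pr (Ψof c σ φ) y := by
    intro y
    have hFi : Integrable
        (fun v => (v / (c * σ ^ 2)) * Real.exp ((y * v - Ψof c σ φ v) / (c * σ ^ 2))) Pr := by
      refine Integrable.mono'
        ((hT2int y).const_mul (κ / (c * σ ^ 2)))
        (((continuous_id.div_const _).mul (hGcont y)).aestronglyMeasurable) ?_
      filter_upwards [haeIcc] with v hv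
      have hvκ : |v| ≤ κ := abs_le.2 ⟨hv.1, hv.2⟩
      rw [Real.norm_eq_abs, abs_mul, abs_div, abs_of_pos hcsq, abs_of_pos (Real.exp_pos _)]
      apply mul_le_mul_of_nonneg_right _ (Real.exp_pos _).le
      exact div_le_div_of_nonneg_right hvκ hcsq.le
    calc |∫ v, (v / (c * σ ^ 2)) * Real.exp ((y * v - Ψof c σ φ v) / (c * σ ^ 2)) ∂Pr|
        ≤ ∫ v, |(v / (c * σ ^ 2)) * Real.exp ((y * v - Ψof c σ φ v) / (c * σ ^ 2))| ∂Pr := by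
          simpa only [Real.norm_eq_abs] using norm_integral_le_integral_norm (μ := Pr) (f := fun v => (v / (c * σ ^ 2)) * Real.exp ((y * v - Ψof c σ φ v) / (c * σ ^ 2)))
      _ ≤ ∫ v, (κ / (c * σ ^ 2)) * Real.exp ((y * v - Ψof c σ φ v) / (c * σ ^ 2)) ∂Pr := by
          apply integral_mono_ae hFi.abs ((hT2int y).const_mul _)
          filter_upwards [haeIcc] with v hv
          have hvκ : |v| ≤ κ := abs_le.2 ⟨hv.1, hv.2⟩
          rw [abs_mul, abs_div, abs_of_pos hcsq, abs_of_pos (Real.exp_pos _)]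
          apply mul_le_mul_of_nonneg_right _ (Real.exp_pos _).le
          exact div_le_div_of_nonneg_right hvκ hcsq.le
      _ = (κ / (c * σ ^ 2)) * T2 c σ Pr (Ψof c σ φ) y := by
          rw [integral_const_mul]; rfl
  -- Tnorm as a difference
  have hTnorm_eq : Tnorm c σ Pr φ = fun y =>
      c * σ ^ 2 * Real.log (T2 c σ Pr (Ψof c σ φ) y)
        - c * σ ^ 2 * Real.log (T2 c σ Pr (Ψof c σ φ) 0) := by
    funext y
    rw [Tnorm, Real.log_div (hT2pos y).ne' (hT2pos 0).ne', mul_sub]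
  have hTnormDeriv : ∀ y : ℝ, HasDerivAt (Tnorm c σ Pr φ)
      (c * σ ^ 2 *
        ((∫ v, (v / (c * σ ^ 2)) * Real.exp ((y * v - Ψof c σ φ v) / (c * σ ^ 2)) ∂Pr)
          / T2 c σ Pr (Ψof c σ φ) y)) y := by
    intro y
    rw [hTnorm_eq]
    exact (((hT2deriv y).log (hT2pos y).ne').const_mul (c * σ ^ 2)).sub_const _
  refine ⟨⟨fun v _ => ⟨hT1int v, hT1pos v⟩, fun y => ⟨hT2int y, hT2pos y⟩⟩, ?_, ?_, ?_, ?_⟩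
  · -- convexity
    refine ⟨convex_univ, ?_⟩
    intro y1 _ y2 _ a b ha hb hab
    rcases ha.eq_or_lt with ha0 | hapos
    · have hb1 : b = 1 := by linarith
      simp [← ha0, hb1]
    rcases hb.eq_or_lt with hb0 | hbpos
    · have ha1 : a = 1 := by linarith
      simp [← hb0, ha1]
    simp only [smul_eq_mul]
    have hpt : ∀ v : ℝ,
        Real.exp (((a * y1 + b * y2) * v - Ψof c σ φ v) / (c * σ ^ 2)) =
        Real.exp ((y1 * v - Ψof c σ φ v) / (c * σ ^ 2)) ^ a *
          Real.exp ((y2 * v - Ψof c σ φ v) / (c * σ ^ 2)) ^ b := by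
      intro v
      rw [← Real.exp_mul, ← Real.exp_mul, ← Real.exp_add]
      congr 1
      have hb' : b = 1 - a := by linarith
      subst hb'
      field_simp
      ring
    have hkey : T2 c σ Pr (Ψof c σ φ) (a * y1 + b * y2) ≤
        T2 c σ Pr (Ψof c σ φ) y1 ^ a * T2 c σ Pr (Ψof c σ φ) y2 ^ b := by
      rw [T2]
      calc (∫ v, Real.exp (((a * y1 + b * y2) * v - Ψof c σ φ v) / (c * σ ^ 2)) ∂Pr)
          = ∫ v, Real.exp ((y1 * v - Ψof c σ φ v) / (c * σ ^ 2)) ^ a *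
              Real.exp ((y2 * v - Ψof c σ φ v) / (c * σ ^ 2)) ^ b ∂Pr := by
            exact integral_congr_ae (Eventually.of_forall fun v => hpt v)
        _ ≤ _ := by
            apply holder_int (hT2int y1) (hT2int y2)
              (fun v => (Real.exp_pos _).le) (fun v => (Real.exp_pos _).le)
              hapos hbpos hab
            have : (fun v : ℝ => Real.exp ((y1 * v - Ψof c σ φ v) / (c * σ ^ 2)) ^ a *
                Real.exp ((y2 * v - Ψof c σ φ v) / (c * σ ^ 2)) ^ b) =
                fun v => Real.exp (((a * y1 + b * y2) * v - Ψof c σ φ v) / (c * σ ^ 2)) := by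
              funext v; rw [hpt v]
            rw [this]
            exact hT2int (a * y1 + b * y2)
    have hlog : Real.log (T2 c σ Pr (Ψof c σ φ) (a * y1 + b * y2)) ≤
        a * Real.log (T2 c σ Pr (Ψof c σ φ) y1) + b * Real.log (T2 c σ Pr (Ψof c σ φ) y2) := by
      calc Real.log (T2 c σ Pr (Ψof c σ φ) (a * y1 + b * y2))
          ≤ Real.log (T2 c σ Pr (Ψof c σ φ) y1 ^ a * T2 c σ Pr (Ψof c σ φ) y2 ^ b) :=
            Real.log_le_log (hT2pos _) hkey
        _ = a * Real.log (T2 c σ Pr (Ψof c σ φ) y1)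
            + b * Real.log (T2 c σ Pr (Ψof c σ φ) y2) := by
            rw [Real.log_mul (Real.rpow_pos_of_pos (hT2pos y1) a).ne'
              (Real.rpow_pos_of_pos (hT2pos y2) b).ne',
              Real.log_rpow (hT2pos y1), Real.log_rpow (hT2pos y2)]
    rw [hTnorm_eq]
    exact comb_lin hcsq.le hab hlog
  · -- differentiability
    exact fun y => (hTnormDeriv y).differentiableAt
  · -- Tnorm 0 = 0
    rw [Tnorm, div_self (hT2pos 0).ne', Real.log_one, mul_zero]
  · -- derivative bound
    intro y
    rw [(hTnormDeriv y).deriv]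
    have hT2y := hT2pos y
    have hD := hDbound y
    rw [abs_mul, abs_of_pos hcsq, abs_div, abs_of_pos hT2y]
    calc c * σ ^ 2 *
        (|∫ v, (v / (c * σ ^ 2)) * Real.exp ((y * v - Ψof c σ φ v) / (c * σ ^ 2)) ∂Pr|
          / T2 c σ Pr (Ψof c σ φ) y)
        ≤ c * σ ^ 2 * ((κ / (c * σ ^ 2) * T2 c σ Pr (Ψof c σ φ) y) / T2 c σ Pr (Ψof c σ φ) y) := by
          gcongr
      _ = κ := by
          field_simp

end
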